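/- Let n ≥ 1, q = 2ⁿ, and let F be a finite field with q³ elements (of characteristic 2). Let α be the automorphism of SL(2,F) applying the field automorphism x ↦ x^q to each matrix entry. Suppose ρ₀, ρ₂ ∈ SL(2,F) are commuting involutions with ρ₀ ≠ ρ₂, α(ρ₀) = ρ₂ and α(ρ₂) = ρ₀ρ₂, and let H = {1, ρ₀, ρ₂, ρ₀ρ₂} be the subgroup they generate. Then the number of right cosets H·x of H in SL(2,F) that are α-invariant (that is, α maps the set H·x onto itself) equals q³ − q. -/

import Mathlib

set_option maxHeartbeats 2000000
open Polynomial

theorem card_SL2 (k : Type) [Field k] [Fintype k] [DecidableEq k] :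
    Nat.card (Matrix.SpecialLinearGroup (Fin 2) k) = Fintype.card k ^ 3 - Fintype.card k := by
  set q := Fintype.card k with hq
  have hq2 : 2 ≤ q := Fintype.one_lt_card
  set d := (Matrix.GeneralLinearGroup.det (n := Fin 2) (R := k)) with hd
  have e : Matrix.SpecialLinearGroup (Fin 2) k ≃ d.ker := {
    toFun := fun A => ⟨Matrix.SpecialLinearGroup.toGL A, by
      refine MonoidHom.mem_ker.mpr (Units.ext ?_)
      simpa [hd, Matrix.SpecialLinearGroup.toGL] using A.2⟩
    invFun := fun g => ⟨(g.1 : Matrix (Fin 2) (Fin 2) k), by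
      have h2 := congrArg Units.val (MonoidHom.mem_ker.mp g.2)
      simpa [hd] using h2⟩
    left_inv := fun A => by ext i j; rfl
    right_inv := fun g => by
      apply Subtype.ext; apply Units.ext; rfl }
  have hsurj : Function.Surjective d := by
    intro u
    refine ⟨Matrix.GeneralLinearGroup.mk'' (Matrix.diagonal ![(u : k), 1]) ?_, ?_⟩
    · simp [Matrix.det_diagonal]
    · apply Units.ext
      have : (Matrix.GeneralLinearGroup.mk'' (Matrix.diagonal ![(u : k), 1])
          (by simp [Matrix.det_diagonal]) : Matrix (Fin 2) (Fin 2) k) = Matrix.diagonal ![(u : k), 1] := rfl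
      simp [hd, this, Matrix.det_diagonal]
  have hcardGL : Nat.card (GL (Fin 2) k) = (q ^ 2 - 1) * (q ^ 2 - q) := by
    rw [Matrix.card_GL_field]
    simp [Fin.prod_univ_two]
    rfl
  have hquot : Nat.card (GL (Fin 2) k) = Nat.card kˣ * Nat.card d.ker := by
    rw [← Nat.card_congr (QuotientGroup.quotientKerEquivOfSurjective d hsurj).toEquiv]
    exact Subgroup.card_eq_card_quotient_mul_card_subgroup d.ker
  have hku : Nat.card kˣ = q - 1 := by
    rw [Nat.card_eq_fintype_card, Fintype.card_units, hq]
  have hSL : Nat.card (Matrix.SpecialLinearGroup (Fin 2) k) = Nat.card d.ker := Nat.card_congr e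
  have harith : (q - 1) * (q ^ 3 - q) = (q ^ 2 - 1) * (q ^ 2 - q) := by
    have h1 : 1 ≤ q := by omega
    have h2 : q ≤ q ^ 2 := by nlinarith
    have h3 : 1 ≤ q ^ 2 := by nlinarith
    have h4 : q ≤ q ^ 3 := by nlinarith
    zify [h1, h2, h3, h4]
    ring
  have : Nat.card kˣ * Nat.card d.ker = (q-1) * (q^3 - q) := by
    rw [← hquot, hcardGL, harith]
  rw [hSL]
  have hpos : 0 < q - 1 := by omega
  rw [hku] at this
  exact Nat.eq_of_mul_eq_mul_left hpos this

theorem card_fixed (F : Type) [Field F] [Fintype F] (q : ℕ) (hq2 : 2 ≤ q)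
    (hF : Fintype.card F = q ^ 3) : Nat.card {x : F // x ^ q = x} = q := by
  classical
  -- primitive root of order q - 1
  obtain ⟨g, hg⟩ := IsCyclic.exists_generator (α := Fˣ)
  have horder : orderOf g = q ^ 3 - 1 := by
    rw [orderOf_eq_card_of_forall_mem_zpowers hg, Nat.card_eq_fintype_card,
      Fintype.card_units, hF]
  have hfact : (q - 1) * (q ^ 2 + q + 1) = q ^ 3 - 1 := by
    have h1 : 1 ≤ q := by omega
    have h3 : 1 ≤ q ^ 3 := Nat.one_le_pow _ _ (by omega)
    zify [h1, h3]
    ring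
  set ζ := g ^ (q ^ 2 + q + 1) with hζ
  have hordζ : orderOf ζ = q - 1 := by
    rw [hζ, orderOf_pow, horder]
    have hdvd : (q ^ 2 + q + 1) ∣ (q ^ 3 - 1) := ⟨q - 1, by rw [mul_comm]; omega⟩
    rw [Nat.gcd_eq_right hdvd, ← hfact, Nat.mul_div_cancel _ (by positivity)]
  have hprim : IsPrimitiveRoot (ζ : F) (q - 1) := by
    rw [← hordζ]
    exact (IsPrimitiveRoot.coe_units_iff).mpr (IsPrimitiveRoot.orderOf ζ)
  have hcardroots : (Polynomial.nthRootsFinset (q - 1) (1 : F)).card = q - 1 :=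
    hprim.card_nthRootsFinset
  -- the fixed set
  have hset : {x : F | x ^ q = x} = insert (0 : F) ↑(Polynomial.nthRootsFinset (q - 1) (1 : F)) := by
    ext x
    simp only [Set.mem_setOf_eq, Set.mem_insert_iff, Finset.coe_insert, Set.mem_setOf_eq,
      Finset.mem_coe, Polynomial.mem_nthRootsFinset (show 0 < q - 1 by omega)]
    constructor
    · intro hx
      rcases eq_or_ne x 0 with rfl | hx0
      · exact Or.inl rfl
      · right
        have : x ^ (q - 1) * x = x := by
          rw [← pow_succ]
          have : q - 1 + 1 = q := by omega
          rw [this]; exact hx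
        have h1 : x ^ (q - 1) * x = 1 * x := by rw [this, one_mul]
        exact mul_right_cancel₀ hx0 h1
    · rintro (rfl | hx)
      · exact zero_pow (by omega)
      · calc x ^ q = x ^ (q - 1 + 1) := by congr 1; omega
          _ = x ^ (q-1) * x := pow_succ _ _
          _ = x := by rw [hx, one_mul]
  have h0 : (0 : F) ∉ (Polynomial.nthRootsFinset (q - 1) (1 : F) : Set F) := by
    simp only [Finset.mem_coe, Polynomial.mem_nthRootsFinset (show 0 < q - 1 by omega)]
    rw [zero_pow (by omega)]
    exact zero_ne_one
  have : Nat.card {x : F // x ^ q = x} = Set.ncard {x : F | x ^ q = x} := rfl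
  rw [this, hset, Set.ncard_insert_of_notMem h0 (Set.toFinite _), Set.ncard_coe_finset,
    hcardroots]
  omega

/-- Let `q = 2ⁿ` (`n ≥ 1`) and `F` a finite field of characteristic `2`
with `q³` elements. Let `α` be the automorphism of `SL(2,F)` applying `x ↦ x^q` to each
entry, and let `ρ₀, ρ₂` be distinct commuting involutions with `α ρ₀ = ρ₂` and
`α ρ₂ = ρ₀ρ₂`, generating `H = {1, ρ₀, ρ₂, ρ₀ρ₂}`. Then the number of `α`-invariant
right cosets of `H` in `SL(2,F)` equals `q³ − q`. -/
theorem stmt_18 (n : ℕ) (hn : 1 ≤ n) (q : ℕ) (hq : q = 2 ^ n)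
    (F : Type) [Field F] [Fintype F] [CharP F 2] (hF : Fintype.card F = q ^ 3)
    (α : Matrix.SpecialLinearGroup (Fin 2) F → Matrix.SpecialLinearGroup (Fin 2) F)
    (hα : ∀ (A : Matrix.SpecialLinearGroup (Fin 2) F) (i j : Fin 2),
      ((α A : Matrix (Fin 2) (Fin 2) F)) i j = ((A : Matrix (Fin 2) (Fin 2) F) i j) ^ q)
    (ρ₀ ρ₂ : Matrix.SpecialLinearGroup (Fin 2) F)
    (h0 : ρ₀ ≠ 1) (h2 : ρ₂ ≠ 1) (hne : ρ₀ ≠ ρ₂)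
    (hsq0 : ρ₀ ^ 2 = 1) (hsq2 : ρ₂ ^ 2 = 1) (hcomm : ρ₀ * ρ₂ = ρ₂ * ρ₀)
    (ha0 : α ρ₀ = ρ₂) (ha2 : α ρ₂ = ρ₀ * ρ₂) :
    {s : Set (Matrix.SpecialLinearGroup (Fin 2) F) |
        (∃ x, s = (fun g => g * x) ''
          ((Subgroup.closure {ρ₀, ρ₂} : Subgroup (Matrix.SpecialLinearGroup (Fin 2) F)) :
            Set (Matrix.SpecialLinearGroup (Fin 2) F))) ∧
        α '' s = s}.ncard = q ^ 3 - q := by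
  classical
  haveI : ExpChar F 2 := ExpChar.prime Nat.prime_two
  have hq2 : 2 ≤ q := by
    rw [hq]
    calc 2 = 2 ^ 1 := (pow_one 2).symm
    _ ≤ 2 ^ n := Nat.pow_le_pow_right (by norm_num) hn
  -- α is a monoid hom
  set φ : F →+* F := iterateFrobenius F 2 n with hφdef
  have hφ : ∀ x : F, φ x = x ^ q := fun x => by rw [hφdef, iterateFrobenius_def, hq]
  have hαhom : α = ⇑(Matrix.SpecialLinearGroup.map (n := Fin 2) φ) := by
    funext A
    apply Subtype.ext
    apply Matrix.ext
    intro i j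
    rw [hα]
    simp [Matrix.SpecialLinearGroup.map, hφ]
    exact (hφ _).symm
  have αmul : ∀ a b, α (a * b) = α a * α b := by
    intro a b; rw [hαhom]; exact map_mul _ a b
  have αone : α 1 = 1 := by rw [hαhom]; exact map_one _
  -- basic identities
  have r00 : ρ₀ * ρ₀ = 1 := by rw [← sq]; exact hsq0
  have r22 : ρ₂ * ρ₂ = 1 := by rw [← sq]; exact hsq2
  have m01 : ρ₀ * (ρ₀ * ρ₂) = ρ₂ := by rw [← mul_assoc, r00, one_mul]
  have m2_02 : ρ₂ * (ρ₀ * ρ₂) = ρ₀ := by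
    rw [← mul_assoc, ← hcomm, mul_assoc, r22, mul_one]
  have m02_0 : (ρ₀ * ρ₂) * ρ₀ = ρ₂ := by
    rw [mul_assoc, ← hcomm, m01]
  have m02_2 : (ρ₀ * ρ₂) * ρ₂ = ρ₀ := by rw [mul_assoc, r22, mul_one]
  have r0202 : (ρ₀ * ρ₂) * (ρ₀ * ρ₂) = 1 := by
    rw [mul_assoc ρ₀ ρ₂ (ρ₀ * ρ₂), m2_02, r00]
  have ha02 : α (ρ₀ * ρ₂) = ρ₀ := by rw [αmul, ha0, ha2, m2_02]
  -- characterization of the closure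
  have memH : ∀ x : Matrix.SpecialLinearGroup (Fin 2) F,
      x ∈ (Subgroup.closure {ρ₀, ρ₂} : Subgroup (Matrix.SpecialLinearGroup (Fin 2) F)) ↔
      x = 1 ∨ x = ρ₀ ∨ x = ρ₂ ∨ x = ρ₀ * ρ₂ := by
    intro x
    constructor
    · intro hx
      refine Subgroup.closure_induction ?_ (Or.inl rfl) ?_ ?_ hx
      · rintro y hy
        rcases hy with rfl | rfl
        · exact Or.inr (Or.inl rfl)
        · exact Or.inr (Or.inr (Or.inl rfl))
      · rintro a b _ _ (rfl | rfl | rfl | rfl) (rfl | rfl | rfl | rfl) <;>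
          simp only [one_mul, mul_one, r00, r22, m01, m2_02, m02_0, m02_2, r0202, ← hcomm] <;>
          tauto
      · rintro a _ (rfl | rfl | rfl | rfl)
        · simp only [inv_one]; tauto
        · rw [inv_eq_of_mul_eq_one_right r00]; tauto
        · rw [inv_eq_of_mul_eq_one_right r22]; tauto
        · rw [inv_eq_of_mul_eq_one_right r0202]; tauto
    · have mem0 : ρ₀ ∈ Subgroup.closure {ρ₀, ρ₂} :=
        Subgroup.subset_closure (Set.mem_insert _ _)
      have mem2 : ρ₂ ∈ Subgroup.closure {ρ₀, ρ₂} :=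
        Subgroup.subset_closure (Set.mem_insert_of_mem _ rfl)
      rintro (rfl | rfl | rfl | rfl)
      · exact one_mem _
      · exact mem0
      · exact mem2
      · exact mul_mem mem0 mem2
  set Hs : Set (Matrix.SpecialLinearGroup (Fin 2) F) :=
    ((Subgroup.closure {ρ₀, ρ₂} : Subgroup (Matrix.SpecialLinearGroup (Fin 2) F)) :
      Set (Matrix.SpecialLinearGroup (Fin 2) F)) with hHs
  have memHs : ∀ x, x ∈ Hs ↔ x = 1 ∨ x = ρ₀ ∨ x = ρ₂ ∨ x = ρ₀ * ρ₂ := fun x => memH x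
  -- cosets
  have coset_shift : ∀ (k x : Matrix.SpecialLinearGroup (Fin 2) F), k ∈ Hs →
      (fun g => g * (k * x)) '' Hs = (fun g => g * x) '' Hs := by
    intro k x hk
    have hk' : k ∈ Subgroup.closure {ρ₀, ρ₂} := hk
    ext z
    constructor
    · rintro ⟨g, hg, rfl⟩
      exact ⟨g * k, mul_mem hg hk', by simp [mul_assoc]⟩
    · rintro ⟨g, hg, rfl⟩
      refine ⟨g * k⁻¹, mul_mem hg (inv_mem hk'), ?_⟩
      simp [mul_assoc]
  have αH : α '' Hs = Hs := by
    ext z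
    constructor
    · rintro ⟨h, hh, rfl⟩
      rcases (memHs h).1 hh with heq | heq | heq | heq <;> rw [heq]
      · rw [αone]; exact (memHs _).2 (Or.inl rfl)
      · rw [ha0]; exact (memHs _).2 (Or.inr (Or.inr (Or.inl rfl)))
      · rw [ha2]; exact (memHs _).2 (Or.inr (Or.inr (Or.inr rfl)))
      · rw [ha02]; exact (memHs _).2 (Or.inr (Or.inl rfl))
    · intro hz
      rcases (memHs z).1 hz with heq | heq | heq | heq
      · exact ⟨1, (memHs _).2 (Or.inl rfl), by rw [αone, heq]⟩
      · exact ⟨ρ₀ * ρ₂, (memHs _).2 (Or.inr (Or.inr (Or.inr rfl))), by rw [ha02, heq]⟩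
      · exact ⟨ρ₀, (memHs _).2 (Or.inr (Or.inl rfl)), by rw [ha0, heq]⟩
      · exact ⟨ρ₂, (memHs _).2 (Or.inr (Or.inr (Or.inl rfl))), by rw [ha2, heq]⟩
  have one_memHs : (1 : Matrix.SpecialLinearGroup (Fin 2) F) ∈ Hs :=
    (memHs _).2 (Or.inl rfl)
  -- coset of a fixed point is invariant
  have inv_coset : ∀ y, α y = y → α '' ((fun g => g * y) '' Hs) = (fun g => g * y) '' Hs := by
    intro y hy
    rw [Set.image_image]
    have h1 : (fun g => α (g * y)) = fun g => (fun g' => g' * y) (α g) := by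
      funext g; simp only [αmul, hy]
    rw [h1, ← Set.image_image (fun g' => g' * y) α, αH]
  -- the main set equality
  have main : {s : Set (Matrix.SpecialLinearGroup (Fin 2) F) |
        (∃ x, s = (fun g => g * x) '' Hs) ∧ α '' s = s} =
      (fun y => (fun g => g * y) '' Hs) '' {y | α y = y} := by
    ext s
    constructor
    · rintro ⟨⟨x, rfl⟩, himg⟩
      have hx1 : x ∈ (fun g => g * x) '' Hs := ⟨1, one_memHs, one_mul x⟩
      have hax : α x ∈ (fun g => g * x) '' Hs := himg ▸ Set.mem_image_of_mem α hx1
      obtain ⟨h, hh, hhx⟩ := hax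
      have hhx' : h * x = α x := hhx
      rcases (memHs h).1 hh with heq | heq | heq | heq <;> rw [heq] at hhx'
      · -- α x = x
        refine ⟨x, ?_, rfl⟩
        simp only [Set.mem_setOf_eq]
        rw [← hhx', one_mul]
      · -- α x = ρ₀ * x, take y = ρ₂ * x
        refine ⟨ρ₂ * x, ?_, ?_⟩
        · simp only [Set.mem_setOf_eq]
          rw [αmul, ha2, ← hhx', ← mul_assoc, m02_0]
        · exact coset_shift ρ₂ x ((memHs _).2 (Or.inr (Or.inr (Or.inl rfl))))
      · -- α x = ρ₂ * x, take y = (ρ₀ * ρ₂) * x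
        refine ⟨(ρ₀ * ρ₂) * x, ?_, ?_⟩
        · simp only [Set.mem_setOf_eq]
          rw [αmul, ha02, ← hhx', ← mul_assoc]
        · exact coset_shift (ρ₀ * ρ₂) x ((memHs _).2 (Or.inr (Or.inr (Or.inr rfl))))
      · -- α x = (ρ₀ * ρ₂) * x, take y = ρ₀ * x
        refine ⟨ρ₀ * x, ?_, ?_⟩
        · simp only [Set.mem_setOf_eq]
          rw [αmul, ha0, ← hhx', ← mul_assoc, m2_02]
        · exact coset_shift ρ₀ x ((memHs _).2 (Or.inr (Or.inl rfl)))
    · rintro ⟨y, hy, rfl⟩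
      exact ⟨⟨y, rfl⟩, inv_coset y hy⟩
  -- injectivity
  have hinj : Set.InjOn (fun y => (fun g => g * y) '' Hs) {y | α y = y} := by
    intro y hy y' hy' heq
    have heq' : (fun g => g * y) '' Hs = (fun g => g * y') '' Hs := heq
    have hy1 : y ∈ (fun g => g * y') '' Hs := by
      rw [← heq']; exact ⟨1, one_memHs, one_mul y⟩
    obtain ⟨h, hh, hhy⟩ := hy1
    have hhy' : h * y' = y := hhy
    have hfix : α h = h := by
      have e1 : α (h * y') = α h * α y' := αmul h y'
      rw [hhy', hy] at e1
      rw [hy'] at e1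
      have h2' : α h * y' = h * y' := by rw [← e1, hhy']
      exact mul_right_cancel h2'
    rcases (memHs h).1 hh with heq | heq | heq | heq <;> rw [heq] at hhy' hfix
    · rw [← hhy', one_mul]
    · exact absurd (ha0.symm.trans hfix) hne.symm
    · exfalso
      apply h0
      have h4' : ρ₀ * ρ₂ = ρ₂ := ha2.symm.trans hfix
      have h3' : ρ₀ * ρ₂ = 1 * ρ₂ := by rw [one_mul]; exact h4'
      exact mul_right_cancel h3'
    · exfalso
      apply h2
      have h4' : ρ₀ = ρ₀ * ρ₂ := ha02.symm.trans hfix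
      have h3' : ρ₀ * 1 = ρ₀ * ρ₂ := by rw [mul_one]; exact h4'
      exact (mul_left_cancel h3').symm
  rw [main, Set.ncard_image_of_injOn hinj]
  -- now count the fixed points
  have hcard1 : ({y : Matrix.SpecialLinearGroup (Fin 2) F | α y = y}).ncard =
      Nat.card {y : Matrix.SpecialLinearGroup (Fin 2) F // α y = y} := rfl
  rw [hcard1]
  -- the fixed subfield
  set K : Subfield F :=
    { carrier := {x : F | x ^ q = x}
      one_mem' := one_pow q
      mul_mem' := fun {a b} ha hb => by
        simp only [Set.mem_setOf_eq] at *
        rw [mul_pow, ha, hb]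
      zero_mem' := zero_pow (by omega)
      add_mem' := fun {a b} ha hb => by
        simp only [Set.mem_setOf_eq] at *
        rw [hq] at *
        rw [add_pow_char_pow, ha, hb]
      neg_mem' := fun {a} ha => by
        simp only [Set.mem_setOf_eq] at *
        rw [CharTwo.neg_eq]
        exact ha
      inv_mem' := fun a ha => by
        simp only [Set.mem_setOf_eq] at *
        rw [inv_pow, ha] } with hK
  have memK : ∀ x : F, x ∈ K ↔ x ^ q = x := fun x => Iff.rfl
  letI : Fintype K := Fintype.ofFinite K
  have hcardK : Fintype.card K = q := by
    rw [← Nat.card_eq_fintype_card]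
    rw [Nat.card_congr (Equiv.subtypeEquivRight (fun x => memK x))]
    exact card_fixed F q hq2 hF
  have det_one_of_map : ∀ (M : Matrix (Fin 2) (Fin 2) K),
      (M.map K.subtype).det = 1 → M.det = 1 := by
    intro M h
    apply Subtype.ext
    have hthis := RingHom.map_det K.subtype M
    rw [RingHom.mapMatrix_apply] at hthis
    calc ((M.det : K) : F) = (M.map (K.subtype)).det := hthis
      _ = 1 := h
  -- equivalence between fixed points and SL(2, K)
  have entry_mem : ∀ (yp : {y : Matrix.SpecialLinearGroup (Fin 2) F // α y = y}) (i j : Fin 2),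
      ((yp.1 : Matrix (Fin 2) (Fin 2) F) i j) ∈ K := by
    intro yp i j
    rw [memK]
    have hthis := congrArg (fun z : Matrix.SpecialLinearGroup (Fin 2) F =>
      (z : Matrix (Fin 2) (Fin 2) F) i j) yp.2
    simpa [hα] using hthis
  have e2 : {y : Matrix.SpecialLinearGroup (Fin 2) F // α y = y} ≃
      Matrix.SpecialLinearGroup (Fin 2) K :=
    { toFun := fun yp => ⟨Matrix.of (fun i j =>
        (⟨(yp.1 : Matrix (Fin 2) (Fin 2) F) i j, entry_mem yp i j⟩ : K)), by
          apply det_one_of_map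
          have hmap : (Matrix.of (fun i j =>
              (⟨(yp.1 : Matrix (Fin 2) (Fin 2) F) i j, entry_mem yp i j⟩ : K))).map K.subtype =
              (yp.1 : Matrix (Fin 2) (Fin 2) F) := by
            ext i j; rfl
          rw [hmap]
          exact yp.1.2⟩
      invFun := fun B => ⟨⟨(B : Matrix (Fin 2) (Fin 2) K).map K.subtype, by
          have hthis := RingHom.map_det K.subtype (B : Matrix (Fin 2) (Fin 2) K)
          rw [RingHom.mapMatrix_apply] at hthis
          rw [← hthis, B.2, map_one]⟩, by
        apply Subtype.ext
        apply Matrix.ext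
        intro i j
        refine (hα _ i j).trans ?_
        exact ((B : Matrix (Fin 2) (Fin 2) K) i j).2⟩
      left_inv := fun yp => by
        apply Subtype.ext
        apply Subtype.ext
        apply Matrix.ext
        intro i j
        rfl
      right_inv := fun B => by
        apply Subtype.ext
        apply Matrix.ext
        intro i j
        apply Subtype.ext
        rfl }
  rw [Nat.card_congr e2, card_SL2 K, hcardK]
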